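/- Let a, b be coprime integers with a + b ≠ 0 and 13 ∣ a + b, and suppose a^13 + b^13 = c^p for some integer c and odd prime p. Then there exist an integer δ and an integer j ≥ 1 such that a + b = 13^{pj−1}·δ^p. -/

import Mathlib

/-- If `a, b` are coprime integers with `a + b ≠ 0`, `13 ∣ a + b` and
`a^13 + b^13 = c^p` for some integer `c` and odd prime `p`, then
`a + b = 13^(pj−1)·δ^p` for some integer `δ` and some integer `j ≥ 1`. -/
theorem sum_is_thirteen_power_times_pth_power
    (a b c : ℤ) (p : ℕ) (hp : p.Prime) (hodd : Odd p)
    (hab : IsCoprime a b) (hne : a + b ≠ 0) (h13 : (13 : ℤ) ∣ a + b)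
    (h : a ^ 13 + b ^ 13 = c ^ p) :
    ∃ (δ : ℤ) (j : ℕ), 1 ≤ j ∧ a + b = 13 ^ (p * j - 1) * δ ^ p := by
  have h13prime : Prime (13 : ℤ) := by norm_num
  have h13a : ¬ (13 : ℤ) ∣ a := by
    intro hda
    have hdb : (13 : ℤ) ∣ b := (dvd_add_right hda).mp h13
    exact h13prime.not_unit (hab.isUnit_of_dvd' hda hdb)
  -- the cofactor Q
  set Q : ℤ := ∑ i ∈ Finset.range 13, a ^ (12 - i) * (-b) ^ i with hQdef
  have hfact : (a + b) * Q = a ^ 13 + b ^ 13 := by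
    simp only [hQdef, Finset.sum_range_succ, Finset.sum_range_zero]
    ring
  have hcongr : (a + b) ∣ Q - 13 * a ^ 12 := by
    have hrw : Q - 13 * a ^ 12 = ∑ i ∈ Finset.range 13, a ^ (12 - i) * ((-b) ^ i - a ^ i) := by
      simp only [hQdef, Finset.sum_range_succ, Finset.sum_range_zero]
      ring
    rw [hrw]
    refine Finset.dvd_sum fun i _ => ?_
    refine Dvd.dvd.mul_left ?_ _
    have h1 : -(a + b) ∣ (-b) ^ i - a ^ i := by
      have hsub : -b - a = -(a + b) := by ring
      rw [← hsub]; exact sub_dvd_pow_sub_pow _ _ _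
    exact neg_dvd.mp h1
  -- nonvanishing
  have hsum0 : a ^ 13 + b ^ 13 ≠ 0 := by
    intro h0
    apply hne
    have : a ^ 13 = (-b) ^ 13 := by rw [Odd.neg_pow (by decide)]; linarith
    have := (Odd.strictMono_pow (R := ℤ) (by decide : Odd 13)).injective this
    linarith
  have hc0 : c ≠ 0 := by
    intro h0; rw [h0, zero_pow hp.ne_zero] at h; exact hsum0 h
  have hQ0 : Q ≠ 0 := by
    intro h0; rw [h0, mul_zero] at hfact; exact hsum0 hfact.symm
  -- multiplicities
  have hfin_s : FiniteMultiplicity (13 : ℤ) (a + b) :=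
    Int.finiteMultiplicity_iff.2 ⟨by norm_num, hne⟩
  have hfin_c : FiniteMultiplicity (13 : ℤ) c :=
    Int.finiteMultiplicity_iff.2 ⟨by norm_num, hc0⟩
  have hfin_Q : FiniteMultiplicity (13 : ℤ) Q :=
    Int.finiteMultiplicity_iff.2 ⟨by norm_num, hQ0⟩
  set α := multiplicity (13 : ℤ) (a + b) with hα
  set j := multiplicity (13 : ℤ) c with hj
  -- LTE
  have hlte : emultiplicity (13 : ℤ) (a ^ 13 + b ^ 13)
      = emultiplicity (13 : ℤ) (a + b) + emultiplicity (13 : ℕ) 13 := by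
    exact_mod_cast Int.emultiplicity_pow_add_pow (p := 13) (by norm_num) (by decide)
      h13 h13a (by decide : Odd 13)
  have hfin13 : FiniteMultiplicity (13 : ℕ) 13 :=
    Nat.finiteMultiplicity_iff.2 ⟨by norm_num, by norm_num⟩
  have h13self : emultiplicity (13 : ℕ) 13 = 1 := hfin13.emultiplicity_self
  have hpow : emultiplicity (13 : ℤ) (c ^ p) = (p : ℕ∞) * emultiplicity (13 : ℤ) c :=
    emultiplicity_pow h13prime
  have hkey : (p * j : ℕ) = α + 1 := by
    have e1 : emultiplicity (13 : ℤ) (a ^ 13 + b ^ 13) = ((α + 1 : ℕ) : ℕ∞) := by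
      rw [hlte, h13self, hfin_s.emultiplicity_eq_multiplicity]
      push_cast; ring
    have e2 : emultiplicity (13 : ℤ) (a ^ 13 + b ^ 13) = ((p * j : ℕ) : ℕ∞) := by
      rw [h, hpow, hfin_c.emultiplicity_eq_multiplicity]
      push_cast; ring
    exact_mod_cast e2.symm.trans e1
  have hα1 : 1 ≤ α := Nat.one_le_iff_ne_zero.2 (multiplicity_ne_zero.2 h13)
  have hj1 : 1 ≤ j := by
    rcases Nat.eq_zero_or_pos j with h0 | h1
    · rw [h0, mul_zero] at hkey; omega
    · exact h1
  -- extract powers of 13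
  obtain ⟨s', hs', hs'13⟩ := hfin_s.exists_eq_pow_mul_and_not_dvd
  obtain ⟨c', hc', hc'13⟩ := hfin_c.exists_eq_pow_mul_and_not_dvd
  -- multiplicity of Q is 1
  have hmQ : multiplicity (13 : ℤ) Q = 1 := by
    have e3 : emultiplicity (13 : ℤ) ((a + b) * Q)
        = emultiplicity (13 : ℤ) (a + b) + emultiplicity (13 : ℤ) Q :=
      emultiplicity_mul h13prime
    rw [hfact] at e3
    have e4 : ((α : ℕ∞)) + emultiplicity (13 : ℤ) Q = (α : ℕ∞) + 1 := by
      rw [← hfin_s.emultiplicity_eq_multiplicity, ← e3, hlte, h13self]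
    have := WithTop.add_left_cancel (by exact_mod_cast WithTop.coe_ne_top (a := α)) e4
    rw [hfin_Q.emultiplicity_eq_multiplicity] at this
    exact_mod_cast (show ((multiplicity (13 : ℤ) Q : ℕ) : ℕ∞) = ((1 : ℕ) : ℕ∞) from this)
  obtain ⟨Q', hQ', hQ'13⟩ := hfin_Q.exists_eq_pow_mul_and_not_dvd
  rw [hmQ, pow_one] at hQ'
  -- reduce the equation
  have heq : s' * Q' = c' ^ p := by
    have hmain : (13 : ℤ) ^ (α + 1) * (s' * Q') = (13 : ℤ) ^ (α + 1) * c' ^ p := by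
      have : (a + b) * Q = (13 ^ j * c') ^ p := by rw [hfact, h, hc']
      rw [hs', hQ'] at this
      rw [mul_pow, ← pow_mul, mul_comm j p, hkey] at this
      ring_nf at this ⊢
      linarith [this]
    exact mul_left_cancel₀ (pow_ne_zero _ (by norm_num)) hmain
  -- s' and Q' are coprime
  have hcop : IsCoprime s' Q' := by
    rw [Int.isCoprime_iff_gcd_eq_one]
    by_contra hg
    obtain ⟨q, hq, hqdvd⟩ := Nat.exists_prime_and_dvd hg
    have hqs : (q : ℤ) ∣ s' := (Int.natCast_dvd_natCast.2 hqdvd).trans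
      (Int.gcd_dvd_left _ _)
    have hqQ : (q : ℤ) ∣ Q' := (Int.natCast_dvd_natCast.2 hqdvd).trans
      (Int.gcd_dvd_right _ _)
    have hqs_ab : (q : ℤ) ∣ a + b := hs' ▸ Dvd.dvd.mul_left hqs _
    have hqQfull : (q : ℤ) ∣ Q := hQ' ▸ Dvd.dvd.mul_left hqQ _
    have hq13a : (q : ℤ) ∣ 13 * a ^ 12 := by
      have := dvd_sub hqQfull (hqs_ab.trans hcongr)
      simpa using this
    rcases Int.Prime.dvd_mul' hq (by exact_mod_cast hq13a) with h1 | h1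
    · have : q = 13 := by
        have := Int.natCast_dvd_natCast.1 (by exact_mod_cast h1)
        exact (Nat.prime_dvd_prime_iff_eq hq (by norm_num)).1 this
      rw [this] at hqs
      exact hs'13 (by exact_mod_cast hqs)
    · have hqa : (q : ℤ) ∣ a := Int.Prime.dvd_pow' hq h1
      have hqb : (q : ℤ) ∣ b := (dvd_add_right hqa).mp hqs_ab
      exact (Int.prime_iff_natAbs_prime.2 (by simpa using hq)).not_unit
        (hab.isUnit_of_dvd' hqa hqb)
  -- conclude
  obtain ⟨δ, hδ⟩ := Int.eq_pow_of_mul_eq_pow_odd_left hcop hodd heq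
  refine ⟨δ, j, hj1, ?_⟩
  have hαeq : α = p * j - 1 := by omega
  rw [← hα, hαeq] at hs'
  rw [hs', hδ]
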